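/- Fix initial data (s₀,i₀) ∈ B with i₀ > 0. For each finite T, let u_T be an optimal control of the finite-horizon problem P^T_{λ₁,λ₂} (minimizing ∫₀^T (λ₁·u + λ₂·i^u) dt among controls with i^u ≤ i_M on [0,T]), extended by 0 on (T,∞). If (T_n) is a sequence with T_n → ∞ such that u_{T_n} converges weakly* in L^∞(0,∞) to some control u, then u is an optimal control for the infinite-horizon problem P^∞_{λ₁,λ₂}. -/

import Mathlib

open MeasureTheory Filter Set intervalIntegral
open scoped ENNReal

noncomputable section

/-- A control: a measurable (essentially bounded) function with values in `[0, umax]`. -/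
def IsControl (umax : ℝ) (u : ℝ → ℝ) : Prop :=
  Measurable u ∧ ∀ t : ℝ, u t ∈ Set.Icc (0 : ℝ) umax

/-- Solution of the controlled SIR system on `[0,∞)`, in integral (i.e. locally absolutely
continuous) form: `s' = -(β-u)·s·i`, `i' = (β-u)·s·i - γ·i` a.e., `s 0 = s₀`, `i 0 = i₀`. -/
def SIRSol (β γ : ℝ) (u s i : ℝ → ℝ) (s₀ i₀ : ℝ) : Prop :=
  Continuous s ∧ Continuous i ∧
  (∀ t : ℝ, 0 ≤ t → s t = s₀ + ∫ τ in (0:ℝ)..t, -((β - u τ) * s τ * i τ)) ∧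
  (∀ t : ℝ, 0 ≤ t → i t = i₀ + ∫ τ in (0:ℝ)..t, ((β - u τ) * s τ * i τ - γ * i τ))

/-- Solution of the controlled SIR system on `[0,T]`, in integral form. -/
def SIRSolOn (β γ T : ℝ) (u s i : ℝ → ℝ) (s₀ i₀ : ℝ) : Prop :=
  ContinuousOn s (Set.Icc 0 T) ∧ ContinuousOn i (Set.Icc 0 T) ∧
  (∀ t ∈ Set.Icc (0:ℝ) T, s t = s₀ + ∫ τ in (0:ℝ)..t, -((β - u τ) * s τ * i τ)) ∧
  (∀ t ∈ Set.Icc (0:ℝ) T, i t = i₀ + ∫ τ in (0:ℝ)..t, ((β - u τ) * s τ * i τ - γ * i τ))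

/-- The triangle `T = {(s,i) ∈ (0,1]² : s + i ≤ 1}`. -/
def Triangle : Set (ℝ × ℝ) :=
  {p | 0 < p.1 ∧ p.1 ≤ 1 ∧ 0 < p.2 ∧ p.2 ≤ 1 ∧ p.1 + p.2 ≤ 1}

/-- The curve `Φ_max`. -/
def PhiMax (β γ umax iM : ℝ) (x : ℝ) : ℝ :=
  if x < γ / (β - umax) then iM
  else γ / (β - umax) + iM - x + (γ / (β - umax)) * (Real.log x - Real.log (γ / (β - umax)))

/-- The curve `Φ₀`. -/
def Phi0 (β γ iM : ℝ) (x : ℝ) : ℝ :=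
  if x < γ / β then iM
  else γ / β + iM - x + (γ / β) * (Real.log x - Real.log (γ / β))

/-- The ICU (state) constraint `i(t) ≤ i_M` for all `t ≥ 0`. -/
def Admissible (iM : ℝ) (i : ℝ → ℝ) : Prop := ∀ t : ℝ, 0 ≤ t → i t ≤ iM

/-- Infinite-horizon cost `J^∞(u) = ∫₀^∞ (λ₁ u + λ₂ i) dt`, with values in `[0,∞]`. -/
def Cost (l1 l2 : ℝ) (u i : ℝ → ℝ) : ℝ≥0∞ :=
  ∫⁻ t in Set.Ioi (0:ℝ), ENNReal.ofReal (l1 * u t + l2 * i t)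

/-- Finite-horizon cost `J^T(u) = ∫₀^T (λ₁ u + λ₂ i) dt`. -/
def CostT (l1 l2 T : ℝ) (u i : ℝ → ℝ) : ℝ≥0∞ :=
  ∫⁻ t in Set.Ioc (0:ℝ) T, ENNReal.ofReal (l1 * u t + l2 * i t)

/-- The safe (no-effort) zone `A`. -/
def SafeZone (β γ iM : ℝ) : Set (ℝ × ℝ) :=
  {p | p ∈ Triangle ∧ ∃ s i : ℝ → ℝ,
    SIRSol β γ (fun _ => 0) s i p.1 p.2 ∧ Admissible iM i}

/-- The viable (feasible) set `B`. -/
def ViableSet (β γ umax iM : ℝ) : Set (ℝ × ℝ) :=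
  {p | p ∈ Triangle ∧ ∃ u s i : ℝ → ℝ, IsControl umax u ∧
    SIRSol β γ u s i p.1 p.2 ∧ Admissible iM i}

/-- Weak* convergence in `L^∞(0,∞)`: testing against every `L¹` function. -/
def WeakStarLim (un : ℕ → ℝ → ℝ) (u : ℝ → ℝ) : Prop :=
  ∀ g : ℝ → ℝ, MeasureTheory.IntegrableOn g (Set.Ioi 0) →
    Filter.Tendsto (fun n => ∫ t in Set.Ioi (0:ℝ), un n t * g t) Filter.atTop
      (nhds (∫ t in Set.Ioi (0:ℝ), u t * g t))

open scoped Topology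

/-- Interval integrability of a measurable function bounded on the interval. -/
lemma myII {f : ℝ → ℝ} {C a b : ℝ} (hf : Measurable f)
    (hC : ∀ t ∈ Set.uIoc a b, |f t| ≤ C) : IntervalIntegrable f volume a b := by
  rw [intervalIntegrable_iff]
  refine Measure.integrableOn_of_bounded (M := C) ?_ hf.aestronglyMeasurable ?_
  · rw [Set.uIoc]; exact (measure_Ioc_lt_top).ne
  · exact (ae_restrict_mem measurableSet_uIoc).mono fun t ht => by
      simpa [Real.norm_eq_abs] using hC t ht

/-- Gronwall inequality, integral form with forcing term. -/
lemma my_gronwall {f φ : ℝ → ℝ} {K T : ℝ} (hK : 0 < K) (hT : 0 ≤ T)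
    (hf : Continuous f) (hφ : Continuous φ) (hφ0 : ∀ r, 0 ≤ φ r)
    (h : ∀ r ∈ Set.Icc (0:ℝ) T, f r ≤ K * (∫ σ in (0:ℝ)..r, f σ) + φ r) :
    f T ≤ K * Real.exp (K * T) * (∫ σ in (0:ℝ)..T, φ σ) + φ T := by
  set F : ℝ → ℝ := fun r => ∫ σ in (0:ℝ)..r, f σ with hF
  set Φ : ℝ → ℝ := fun r => ∫ σ in (0:ℝ)..r, φ σ * Real.exp (-(K * σ)) with hΦ
  have hFd : ∀ r : ℝ, HasDerivAt F (f r) r := by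
    intro r
    exact intervalIntegral.integral_hasDerivAt_right
      (hf.intervalIntegrable _ _) (hf.stronglyMeasurableAtFilter _ _) hf.continuousAt
  have hcont : Continuous fun σ => φ σ * Real.exp (-(K * σ)) := by
    exact hφ.mul ((Real.continuous_exp).comp (continuous_const.mul continuous_id).neg)
  have hΦd : ∀ r : ℝ, HasDerivAt Φ (φ r * Real.exp (-(K * r))) r := by
    intro r
    exact intervalIntegral.integral_hasDerivAt_right
      (hcont.intervalIntegrable _ _) (hcont.stronglyMeasurableAtFilter _ _) hcont.continuousAt
  set G : ℝ → ℝ := fun r => F r * Real.exp (-(K * r)) - Φ r with hG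
  have hGd : ∀ r : ℝ, HasDerivAt G
      ((f r - K * F r) * Real.exp (-(K * r)) - φ r * Real.exp (-(K * r))) r := by
    intro r
    have he : HasDerivAt (fun r => Real.exp (-(K * r))) (-K * Real.exp (-(K * r))) r := by
      have : HasDerivAt (fun r : ℝ => -(K * r)) (-K) r := by
        exact ((hasDerivAt_id' r).const_mul K).fun_neg.congr_deriv (by ring)
      convert this.exp using 1; ring
    have := ((hFd r).fun_mul he).fun_sub (hΦd r)
    exact this.congr_deriv (by ring)
  have hGanti : AntitoneOn G (Set.Icc 0 T) := by
    apply antitoneOn_of_deriv_nonpos (convex_Icc 0 T)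
    · exact fun x _ => ((hGd x).differentiableAt.continuousAt).continuousWithinAt
    · exact fun x _ => (hGd x).differentiableAt.differentiableWithinAt
    · intro x hx
      rw [(hGd x).deriv]
      have hx' : x ∈ Set.Icc (0:ℝ) T := interior_subset hx
      have := h x hx'
      have hexp : (0:ℝ) < Real.exp (-(K * x)) := Real.exp_pos _
      nlinarith [hφ0 x]
  have hG0 : G 0 = 0 := by simp [hG, hF, hΦ]
  have hGT : G T ≤ 0 := by
    have := hGanti (Set.left_mem_Icc.2 hT) (Set.right_mem_Icc.2 hT) hT
    rw [hG0] at this; exact this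
  -- F T * exp(-(K*T)) ≤ Φ T ≤ ∫₀^T φ
  have hΦle : Φ T ≤ ∫ σ in (0:ℝ)..T, φ σ := by
    apply intervalIntegral.integral_mono_on hT (hcont.intervalIntegrable _ _)
      (hφ.intervalIntegrable _ _)
    intro x hx
    have : Real.exp (-(K * x)) ≤ 1 := by
      rw [Real.exp_le_one_iff]
      nlinarith [hx.1, hK.le]
    nlinarith [hφ0 x]
  have hFT : F T ≤ Real.exp (K * T) * ∫ σ in (0:ℝ)..T, φ σ := by
    have h1 : F T * Real.exp (-(K * T)) ≤ Φ T := by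
      have := hGT; simp only [hG] at this; linarith
    have h2 : F T * Real.exp (-(K * T)) ≤ ∫ σ in (0:ℝ)..T, φ σ := le_trans h1 hΦle
    have hexp : (0:ℝ) < Real.exp (-(K * T)) := Real.exp_pos _
    calc F T = (F T * Real.exp (-(K * T))) * Real.exp (K * T) := by
              rw [mul_assoc, ← Real.exp_add]; simp
      _ ≤ (∫ σ in (0:ℝ)..T, φ σ) * Real.exp (K * T) := by
              apply mul_le_mul_of_nonneg_right h2 (Real.exp_pos _).le
      _ = Real.exp (K * T) * ∫ σ in (0:ℝ)..T, φ σ := by ring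
  have := h T (Set.right_mem_Icc.2 hT)
  have : f T ≤ K * F T + φ T := this
  nlinarith [hFT, hK]

/-- Backward Gronwall: forces the value at 0 to be ≤ 0. -/
lemma my_gronwall_zero {f : ℝ → ℝ} {K T : ℝ} (hK : 0 < K) (hT : 0 ≤ T)
    (hf : Continuous f)
    (h : ∀ r ∈ Set.Icc (0:ℝ) T, f r ≤ K * ∫ σ in r..T, f σ) : f 0 ≤ 0 := by
  have hg : Continuous fun r => f (T - r) := hf.comp (continuous_const.sub continuous_id)
  have := my_gronwall (f := fun r => f (T - r)) (φ := fun _ => 0) hK hT hg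
    continuous_const (fun _ => le_refl 0) ?_
  · simpa using this
  · intro r hr
    have hsub : ∫ σ in (0:ℝ)..r, f (T - σ) = ∫ x in (T - r)..T, f x := by
      have := intervalIntegral.integral_comp_sub_left (a := (0:ℝ)) (b := r) f T
      simpa using this
    have hTr : T - r ∈ Set.Icc (0:ℝ) T := ⟨by linarith [hr.2], by linarith [hr.1]⟩
    have := h (T - r) hTr
    simp only [hsub, add_zero]
    exact this

/-- If `x` solves an integral equation with kernel dominated by `C·|x|` on `[0,t₀]`
and vanishes at `t₀`, then it vanishes at `0`. -/
lemma vanish_aux {x h : ℝ → ℝ} {t₀ C : ℝ} (hx : Continuous x) (hh : Measurable h)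
    (ht₀ : 0 ≤ t₀) (hC : 0 < C)
    (heq : ∀ t ∈ Set.Icc (0:ℝ) t₀, x t = x 0 + ∫ τ in (0:ℝ)..t, h τ)
    (hbd : ∀ τ ∈ Set.Icc (0:ℝ) t₀, |h τ| ≤ C * |x τ|)
    (hzero : x t₀ = 0) : x 0 = 0 := by
  obtain ⟨Mx, hMx⟩ := (isCompact_Icc (a := (0:ℝ)) (b := t₀)).exists_bound_of_continuousOn
    hx.continuousOn
  have hsub : ∀ r₁ r₂, 0 ≤ r₁ → r₂ ≤ t₀ → r₁ ≤ r₂ → Set.uIoc r₁ r₂ ⊆ Set.Icc 0 t₀ := by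
    intro r₁ r₂ h0 h1 h2
    rw [Set.uIoc_of_le h2]
    exact fun τ hτ => ⟨h0.trans hτ.1.le, hτ.2.trans h1⟩
  have hint : ∀ r₁ r₂, 0 ≤ r₁ → r₂ ≤ t₀ → r₁ ≤ r₂ → IntervalIntegrable h volume r₁ r₂ := by
    intro r₁ r₂ h0 h1 h2
    apply myII (C := C * Mx) hh
    intro τ hτ
    have hτ' := hsub r₁ r₂ h0 h1 h2 hτ
    have := hbd τ hτ'
    have := hMx τ hτ'
    rw [Real.norm_eq_abs] at this
    nlinarith [abs_nonneg (x τ), abs_nonneg (h τ)]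
  have key : ∀ r ∈ Set.Icc (0:ℝ) t₀, |x r| ≤ C * ∫ σ in r..t₀, |x σ| := by
    intro r hr
    have e1 : IntervalIntegrable h volume 0 r := hint 0 r le_rfl hr.2 hr.1
    have e2 : IntervalIntegrable h volume 0 t₀ := hint 0 t₀ le_rfl le_rfl ht₀
    have e3 : IntervalIntegrable h volume r t₀ := hint r t₀ hr.1 le_rfl hr.2
    have hdiff : x t₀ - x r = ∫ τ in r..t₀, h τ := by
      rw [heq t₀ (Set.right_mem_Icc.2 ht₀), heq r hr]
      rw [add_sub_add_left_eq_sub]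
      exact integral_interval_sub_left e2 e1
    have hxr : |x r| = |∫ τ in r..t₀, h τ| := by
      rw [← hdiff, hzero]; rw [zero_sub, abs_neg]
    rw [hxr]
    calc |∫ τ in r..t₀, h τ| ≤ ∫ τ in r..t₀, |h τ| :=
          intervalIntegral.abs_integral_le_integral_abs hr.2
      _ ≤ ∫ τ in r..t₀, C * |x τ| := by
          apply intervalIntegral.integral_mono_on hr.2 e3.abs
            ((continuous_const.mul hx.abs).intervalIntegrable _ _)
          intro τ hτ
          exact hbd τ ⟨hr.1.trans hτ.1, hτ.2⟩
      _ = C * ∫ σ in r..t₀, |x σ| := intervalIntegral.integral_const_mul _ _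
  have := my_gronwall_zero hC ht₀ hx.abs key
  have h0 : |x 0| ≤ 0 := this
  exact abs_eq_zero.1 (le_antisymm h0 (abs_nonneg _))

lemma sir_pos {β γ umax : ℝ} {u s i : ℝ → ℝ} {s₀ i₀ : ℝ}
    (hβ : 0 < β) (hγ : 0 < γ) (humaxβ : umax < β)
    (hu : IsControl umax u) (hsol : SIRSol β γ u s i s₀ i₀)
    (hs₀ : 0 < s₀) (hi₀ : 0 < i₀) :
    ∀ t, 0 ≤ t → 0 < s t ∧ 0 < i t := by
  obtain ⟨hscont, hicont, hseq, hieq⟩ := hsol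
  obtain ⟨humeas, hubd⟩ := hu
  have hs0 : s 0 = s₀ := by simpa using hseq 0 le_rfl
  have hi0 : i 0 = i₀ := by simpa using hieq 0 le_rfl
  have hβu : ∀ τ, |β - u τ| ≤ β := by
    intro τ
    have h1 := (hubd τ).1; have h2 := (hubd τ).2
    rw [abs_le]; constructor <;> nlinarith
  have hsne : ∀ t₀, 0 ≤ t₀ → s t₀ ≠ 0 := by
    intro t₀ ht₀ hzero
    obtain ⟨Mi, hMi⟩ := (isCompact_Icc (a := (0:ℝ)) (b := t₀)).exists_bound_of_continuousOn
      hicont.continuousOn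
    have hMi0 : 0 ≤ Mi := le_trans (norm_nonneg _) (hMi 0 (Set.left_mem_Icc.2 ht₀))
    have h0 : s 0 = 0 := by
      apply vanish_aux (h := fun τ => -((β - u τ) * s τ * i τ)) hscont
        ((((measurable_const.sub humeas).mul hscont.measurable).mul hicont.measurable).neg) ht₀ (show (0:ℝ) < β * Mi + 1 by positivity)
        (fun t ht => by rw [← hs0] at hseq; exact hseq t ht.1) ?_ hzero
      intro τ hτ
      have h1 := hMi τ hτ
      rw [Real.norm_eq_abs] at h1
      have h2 := hβu τ
      have e : |-((β - u τ) * s τ * i τ)| = |β - u τ| * |i τ| * |s τ| := by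
        rw [abs_neg, abs_mul, abs_mul]; ring
      rw [e]
      have : |β - u τ| * |i τ| ≤ β * Mi := by
        apply mul_le_mul h2 h1 (abs_nonneg _) hβ.le
      nlinarith [abs_nonneg (s τ), abs_nonneg (β - u τ), abs_nonneg (i τ)]
    rw [hs0] at h0; exact hs₀.ne' h0
  have hine : ∀ t₀, 0 ≤ t₀ → i t₀ ≠ 0 := by
    intro t₀ ht₀ hzero
    obtain ⟨Ms, hMs⟩ := (isCompact_Icc (a := (0:ℝ)) (b := t₀)).exists_bound_of_continuousOn
      hscont.continuousOn
    have hMs0 : 0 ≤ Ms := le_trans (norm_nonneg _) (hMs 0 (Set.left_mem_Icc.2 ht₀))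
    have h0 : i 0 = 0 := by
      apply vanish_aux (h := fun τ => (β - u τ) * s τ * i τ - γ * i τ) hicont
        ((((measurable_const.sub humeas).mul hscont.measurable).mul hicont.measurable).sub
          (measurable_const.mul hicont.measurable)) ht₀ (show (0:ℝ) < β * Ms + γ by positivity)
        (fun t ht => by rw [← hi0] at hieq; exact hieq t ht.1) ?_ hzero
      intro τ hτ
      have h1 := hMs τ hτ
      rw [Real.norm_eq_abs] at h1
      have h2 := hβu τ
      calc |(β - u τ) * s τ * i τ - γ * i τ| ≤ |(β - u τ) * s τ * i τ| + |γ * i τ| :=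
            abs_sub _ _
        _ ≤ β * Ms * |i τ| + γ * |i τ| := by
            rw [abs_mul, abs_mul, abs_mul]
            have : |β - u τ| * |s τ| ≤ β * Ms := mul_le_mul h2 h1 (abs_nonneg _) hβ.le
            have hγ' : |γ| = γ := abs_of_pos hγ
            nlinarith [abs_nonneg (i τ), abs_nonneg (β - u τ), abs_nonneg (s τ)]
        _ = (β * Ms + γ) * |i τ| := by ring
    rw [hi0] at h0; exact hi₀.ne' h0
  intro t ht
  constructor
  · by_contra hle
    push_neg at hle
    have h0mem : (0:ℝ) ∈ Set.Icc (s t) (s 0) := ⟨hle, by rw [hs0]; exact hs₀.le⟩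
    obtain ⟨t₀, ht₀mem, ht₀⟩ := intermediate_value_Icc' ht hscont.continuousOn h0mem
    exact hsne t₀ ht₀mem.1 ht₀
  · by_contra hle
    push_neg at hle
    have h0mem : (0:ℝ) ∈ Set.Icc (i t) (i 0) := ⟨hle, by rw [hi0]; exact hi₀.le⟩
    obtain ⟨t₀, ht₀mem, ht₀⟩ := intermediate_value_Icc' ht hicont.continuousOn h0mem
    exact hine t₀ ht₀mem.1 ht₀

lemma sir_bounds {β γ umax : ℝ} {u s i : ℝ → ℝ} {s₀ i₀ : ℝ}
    (hβ : 0 < β) (hγ : 0 < γ) (humaxβ : umax < β)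
    (hu : IsControl umax u) (hsol : SIRSol β γ u s i s₀ i₀)
    (hs₀ : 0 < s₀) (hi₀ : 0 < i₀) (hsum : s₀ + i₀ ≤ 1) :
    ∀ t, 0 ≤ t → 0 ≤ s t ∧ 0 ≤ i t ∧ s t + i t ≤ 1 := by
  have hpos := sir_pos hβ hγ humaxβ hu hsol hs₀ hi₀
  obtain ⟨hscont, hicont, hseq, hieq⟩ := hsol
  obtain ⟨humeas, hubd⟩ := hu
  intro t ht
  refine ⟨(hpos t ht).1.le, (hpos t ht).2.le, ?_⟩
  obtain ⟨Mi, hMi⟩ := (isCompact_Icc (a := (0:ℝ)) (b := t)).exists_bound_of_continuousOn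
    hicont.continuousOn
  obtain ⟨Ms, hMs⟩ := (isCompact_Icc (a := (0:ℝ)) (b := t)).exists_bound_of_continuousOn
    hscont.continuousOn
  have hβu : ∀ τ, |β - u τ| ≤ β := by
    intro τ
    have h1 := (hubd τ).1; have h2 := (hubd τ).2
    rw [abs_le]; constructor <;> nlinarith
  have hbd : ∀ f : ℝ → ℝ, Measurable f → (∀ τ ∈ Set.Icc (0:ℝ) t, |f τ| ≤ β * Ms * Mi + γ * Mi) →
      IntervalIntegrable f volume 0 t := by
    intro f hf hb
    apply myII hf
    intro τ hτ
    apply hb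
    rw [Set.uIoc_of_le ht] at hτ
    exact ⟨hτ.1.le, hτ.2⟩
  have hMs0 : 0 ≤ Ms := le_trans (norm_nonneg _) (hMs 0 (Set.left_mem_Icc.2 ht))
  have hMi0 : 0 ≤ Mi := le_trans (norm_nonneg _) (hMi 0 (Set.left_mem_Icc.2 ht))
  have hb1 : ∀ τ ∈ Set.Icc (0:ℝ) t, |(-((β - u τ) * s τ * i τ))| ≤ β * Ms * Mi + γ * Mi := by
    intro τ hτ
    have h1 := hMi τ hτ; have h2 := hMs τ hτ
    rw [Real.norm_eq_abs] at h1 h2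
    rw [abs_neg, abs_mul, abs_mul]
    have hms : |β - u τ| * |s τ| ≤ β * Ms := mul_le_mul (hβu τ) h2 (abs_nonneg _) hβ.le
    have hmi : |β - u τ| * |s τ| * |i τ| ≤ β * Ms * Mi :=
      mul_le_mul hms h1 (abs_nonneg _) (by positivity)
    nlinarith [mul_nonneg hγ.le hMi0]
  have hb2 : ∀ τ ∈ Set.Icc (0:ℝ) t, |(β - u τ) * s τ * i τ - γ * i τ| ≤ β * Ms * Mi + γ * Mi := by
    intro τ hτ
    have h1 := hMi τ hτ; have h2 := hMs τ hτ
    rw [Real.norm_eq_abs] at h1 h2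
    calc |(β - u τ) * s τ * i τ - γ * i τ| ≤ |(β - u τ) * s τ * i τ| + |γ * i τ| := abs_sub _ _
      _ ≤ β * Ms * Mi + γ * Mi := by
          rw [abs_mul, abs_mul, abs_mul, abs_of_pos hγ]
          have hms : |β - u τ| * |s τ| ≤ β * Ms := mul_le_mul (hβu τ) h2 (abs_nonneg _) hβ.le
          have hmi : |β - u τ| * |s τ| * |i τ| ≤ β * Ms * Mi :=
            mul_le_mul hms h1 (abs_nonneg _) (by positivity)
          have : γ * |i τ| ≤ γ * Mi := mul_le_mul_of_nonneg_left h1 hγ.le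
          linarith
  have hi1 : IntervalIntegrable (fun τ => -((β - u τ) * s τ * i τ)) volume 0 t :=
    hbd _ ((((measurable_const.sub humeas).mul hscont.measurable).mul hicont.measurable).neg) hb1
  have hi2 : IntervalIntegrable (fun τ => (β - u τ) * s τ * i τ - γ * i τ) volume 0 t :=
    hbd _ ((((measurable_const.sub humeas).mul hscont.measurable).mul hicont.measurable).sub
      (measurable_const.mul hicont.measurable)) hb2
  have hsum' : s t + i t = s₀ + i₀ + ∫ τ in (0:ℝ)..t, (-(γ * i τ)) := by
    have hadd : (∫ τ in (0:ℝ)..t, -((β - u τ) * s τ * i τ))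
        + (∫ τ in (0:ℝ)..t, ((β - u τ) * s τ * i τ - γ * i τ))
        = ∫ τ in (0:ℝ)..t, -(γ * i τ) := by
      rw [← intervalIntegral.integral_add hi1 hi2]
      apply intervalIntegral.integral_congr
      intro τ _
      ring
    rw [hseq t ht, hieq t ht]
    linarith [hadd]
  have hneg : (∫ τ in (0:ℝ)..t, (-(γ * i τ))) ≤ 0 := by
    rw [intervalIntegral.integral_neg]
    have : 0 ≤ ∫ τ in (0:ℝ)..t, γ * i τ := by
      apply intervalIntegral.integral_nonneg ht
      intro τ hτ
      have := (hpos τ hτ.1).2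
      positivity
    linarith
  rw [hsum']; linarith

set_option maxHeartbeats 1000000 in
/-- Key Gronwall-type estimate comparing two solutions. -/
lemma key_est {β γ umax : ℝ} {u1 u2 s1 i1 s2 i2 : ℝ → ℝ} {s₀ i₀ : ℝ}
    (hβ : 0 < β) (hγ : 0 < γ) (humax : 0 < umax) (humaxβ : umax < β)
    (hu1 : IsControl umax u1) (hu2 : IsControl umax u2)
    (hsol1 : SIRSol β γ u1 s1 i1 s₀ i₀) (hsol2 : SIRSol β γ u2 s2 i2 s₀ i₀)
    (hs₀ : 0 < s₀) (hi₀ : 0 < i₀) (hsum : s₀ + i₀ ≤ 1) {r : ℝ} (hr0 : 0 ≤ r) :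
    |s1 r - s2 r| + |i1 r - i2 r| ≤ (2 * β + γ)
        * (∫ σ in (0:ℝ)..r, (|s1 σ - s2 σ| + |i1 σ - i2 σ|))
      + 2 * |∫ σ in (0:ℝ)..r, (u1 σ - u2 σ) * (s2 σ * i2 σ)| := by
  have hbd1 : ∀ τ : ℝ, 0 ≤ τ → 0 ≤ s1 τ ∧ 0 ≤ i1 τ ∧ s1 τ + i1 τ ≤ 1 :=
    sir_bounds hβ hγ humaxβ hu1 hsol1 hs₀ hi₀ hsum
  have hbd2 : ∀ τ : ℝ, 0 ≤ τ → 0 ≤ s2 τ ∧ 0 ≤ i2 τ ∧ s2 τ + i2 τ ≤ 1 :=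
    sir_bounds hβ hγ humaxβ hu2 hsol2 hs₀ hi₀ hsum
  obtain ⟨hs1c, hi1c, hs1eq, hi1eq⟩ := hsol1
  obtain ⟨hs2c, hi2c, hs2eq, hi2eq⟩ := hsol2
  obtain ⟨hu1m, hu1b⟩ := hu1
  obtain ⟨hu2m, hu2b⟩ := hu2
  have hβu1 : ∀ τ, |β - u1 τ| ≤ β := by
    intro τ; have h1 := (hu1b τ).1; have h2 := (hu1b τ).2
    rw [abs_le]; constructor <;> nlinarith
  have hβu2 : ∀ τ, |β - u2 τ| ≤ β := by
    intro τ; have h1 := (hu2b τ).1; have h2 := (hu2b τ).2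
    rw [abs_le]; constructor <;> nlinarith
  have huu : ∀ τ, |u1 τ - u2 τ| ≤ umax := by
    intro τ; have h1 := (hu1b τ).1; have h2 := (hu1b τ).2
    have h3 := (hu2b τ).1; have h4 := (hu2b τ).2
    rw [abs_le]; constructor <;> nlinarith
  set e : ℝ → ℝ := fun σ => |s1 σ - s2 σ| + |i1 σ - i2 σ| with he
  have hec : Continuous e := (hs1c.sub hs2c).abs.add ((hi1c.sub hi2c)).abs
  have huIoc : Set.uIoc (0:ℝ) r ⊆ Set.Icc 0 r := by
    rw [Set.uIoc_of_le hr0]; exact fun τ hτ => ⟨hτ.1.le, hτ.2⟩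
  -- uniform [0,1] bounds on [0,r]
  have habs : ∀ τ ∈ Set.Icc (0:ℝ) r, |s1 τ| ≤ 1 ∧ |i1 τ| ≤ 1 ∧ |s2 τ| ≤ 1 ∧ |i2 τ| ≤ 1 := by
    intro τ hτ
    obtain ⟨a1, a2, a3⟩ := hbd1 τ hτ.1
    obtain ⟨b1, b2, b3⟩ := hbd2 τ hτ.1
    refine ⟨?_, ?_, ?_, ?_⟩ <;> rw [abs_of_nonneg (by assumption)] <;> linarith
  -- pointwise product estimate
  have hprod : ∀ τ ∈ Set.Icc (0:ℝ) r, |s1 τ * i1 τ - s2 τ * i2 τ| ≤ e τ := by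
    intro τ hτ
    obtain ⟨a1, a2, a3, a4⟩ := habs τ hτ
    have hrw : s1 τ * i1 τ - s2 τ * i2 τ = s1 τ * (i1 τ - i2 τ) + i2 τ * (s1 τ - s2 τ) := by ring
    rw [hrw]
    calc |s1 τ * (i1 τ - i2 τ) + i2 τ * (s1 τ - s2 τ)|
        ≤ |s1 τ| * |i1 τ - i2 τ| + |i2 τ| * |s1 τ - s2 τ| := by
          rw [← abs_mul, ← abs_mul]; exact abs_add_le _ _
      _ ≤ e τ := by
          have n1 := abs_nonneg (i1 τ - i2 τ); have n2 := abs_nonneg (s1 τ - s2 τ)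
          have := mul_le_mul a1 (le_refl |i1 τ - i2 τ|) n1 zero_le_one
          have := mul_le_mul a4 (le_refl |s1 τ - s2 τ|) n2 zero_le_one
          rw [he]; simp only
          nlinarith
  -- integrands
  set D1s : ℝ → ℝ := fun τ => -((β - u1 τ) * (s1 τ * i1 τ - s2 τ * i2 τ)) with hD1s
  set D1i : ℝ → ℝ := fun τ => (β - u1 τ) * (s1 τ * i1 τ - s2 τ * i2 τ) - γ * (i1 τ - i2 τ)
    with hD1i
  set D2 : ℝ → ℝ := fun τ => (u1 τ - u2 τ) * (s2 τ * i2 τ) with hD2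
  set P1 : ℝ → ℝ := fun τ => -((β - u1 τ) * s1 τ * i1 τ) with hP1
  set P2 : ℝ → ℝ := fun τ => -((β - u2 τ) * s2 τ * i2 τ) with hP2
  set Q1 : ℝ → ℝ := fun τ => (β - u1 τ) * s1 τ * i1 τ - γ * i1 τ with hQ1
  set Q2 : ℝ → ℝ := fun τ => (β - u2 τ) * s2 τ * i2 τ - γ * i2 τ with hQ2
  -- integrability of everything on [0,r] via boundedness
  have hIIgen : ∀ f : ℝ → ℝ, Measurable f → (∃ C, ∀ τ ∈ Set.Icc (0:ℝ) r, |f τ| ≤ C) →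
      IntervalIntegrable f volume 0 r := by
    rintro f hf ⟨C, hC⟩
    exact myII hf fun τ hτ => hC τ (huIoc hτ)
  have hbde : ∀ τ ∈ Set.Icc (0:ℝ) r, e τ ≤ 4 := by
    intro τ hτ
    obtain ⟨a1, a2, a3, a4⟩ := habs τ hτ
    rw [he]; simp only
    calc |s1 τ - s2 τ| + |i1 τ - i2 τ| ≤ (|s1 τ| + |s2 τ|) + (|i1 τ| + |i2 τ|) := by
          have := abs_sub (s1 τ) (s2 τ); have := abs_sub (i1 τ) (i2 τ); linarith
      _ ≤ 4 := by linarith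
  have hD1s_bd : ∀ τ ∈ Set.Icc (0:ℝ) r, |D1s τ| ≤ β * e τ := by
    intro τ hτ
    rw [hD1s]; simp only
    rw [abs_neg, abs_mul]
    exact mul_le_mul (hβu1 τ) (hprod τ hτ) (abs_nonneg _) hβ.le
  have hD1i_bd : ∀ τ ∈ Set.Icc (0:ℝ) r, |D1i τ| ≤ (β + γ) * e τ := by
    intro τ hτ
    rw [hD1i]; simp only
    have h2 : |i1 τ - i2 τ| ≤ e τ := by
      rw [he]; simp only; linarith [abs_nonneg (s1 τ - s2 τ)]
    calc |(β - u1 τ) * (s1 τ * i1 τ - s2 τ * i2 τ) - γ * (i1 τ - i2 τ)|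
        ≤ |(β - u1 τ) * (s1 τ * i1 τ - s2 τ * i2 τ)| + |γ * (i1 τ - i2 τ)| := abs_sub _ _
      _ ≤ β * e τ + γ * e τ := by
          rw [abs_mul, abs_mul, abs_of_pos hγ]
          have := mul_le_mul (hβu1 τ) (hprod τ hτ) (abs_nonneg _) hβ.le
          have := mul_le_mul_of_nonneg_left h2 hγ.le
          linarith
      _ = (β + γ) * e τ := by ring
  have hD1s_meas : Measurable D1s := (((measurable_const.sub hu1m)).mul
    ((hs1c.measurable.mul hi1c.measurable).sub (hs2c.measurable.mul hi2c.measurable))).neg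
  have hD1i_meas : Measurable D1i := ((((measurable_const.sub hu1m)).mul
    ((hs1c.measurable.mul hi1c.measurable).sub (hs2c.measurable.mul hi2c.measurable))).sub
    (measurable_const.mul (hi1c.measurable.sub hi2c.measurable)))
  have hD2_meas : Measurable D2 := (hu1m.sub hu2m).mul (hs2c.measurable.mul hi2c.measurable)
  have hD1s_int : IntervalIntegrable D1s volume 0 r :=
    hIIgen _ hD1s_meas ⟨β * 4, fun τ hτ => le_trans (hD1s_bd τ hτ)
      (mul_le_mul_of_nonneg_left (hbde τ hτ) hβ.le)⟩
  have hD1i_int : IntervalIntegrable D1i volume 0 r :=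
    hIIgen _ hD1i_meas ⟨(β + γ) * 4, fun τ hτ => le_trans (hD1i_bd τ hτ)
      (mul_le_mul_of_nonneg_left (hbde τ hτ) (by positivity))⟩
  have hD2_int : IntervalIntegrable D2 volume 0 r := by
    apply hIIgen _ hD2_meas
    refine ⟨umax, fun τ hτ => ?_⟩
    obtain ⟨a1, a2, a3, a4⟩ := habs τ hτ
    rw [abs_mul, abs_mul]
    calc |u1 τ - u2 τ| * (|s2 τ| * |i2 τ|) ≤ umax * 1 := by
          have h1 : |s2 τ| * |i2 τ| ≤ 1 := by nlinarith [abs_nonneg (s2 τ), abs_nonneg (i2 τ)]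
          exact mul_le_mul (huu τ) h1 (by positivity) humax.le
      _ = umax := mul_one _
  have hP1_int : IntervalIntegrable P1 volume 0 r := by
    apply hIIgen _ ((((measurable_const.sub hu1m)).mul hs1c.measurable).mul hi1c.measurable).neg
    refine ⟨β, fun τ hτ => ?_⟩
    obtain ⟨a1, a2, a3, a4⟩ := habs τ hτ
    show |-((β - u1 τ) * s1 τ * i1 τ)| ≤ β
    rw [abs_neg, mul_assoc, abs_mul, abs_mul]
    calc |β - u1 τ| * (|s1 τ| * |i1 τ|) ≤ β * 1 := by
          have h1 : |s1 τ| * |i1 τ| ≤ 1 := by nlinarith [abs_nonneg (s1 τ), abs_nonneg (i1 τ)]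
          exact mul_le_mul (hβu1 τ) h1 (by positivity) hβ.le
      _ = β := mul_one _
  have hP2_int : IntervalIntegrable P2 volume 0 r := by
    apply hIIgen _ ((((measurable_const.sub hu2m)).mul hs2c.measurable).mul hi2c.measurable).neg
    refine ⟨β, fun τ hτ => ?_⟩
    obtain ⟨a1, a2, a3, a4⟩ := habs τ hτ
    show |-((β - u2 τ) * s2 τ * i2 τ)| ≤ β
    rw [abs_neg, mul_assoc, abs_mul, abs_mul]
    calc |β - u2 τ| * (|s2 τ| * |i2 τ|) ≤ β * 1 := by
          have h1 : |s2 τ| * |i2 τ| ≤ 1 := by nlinarith [abs_nonneg (s2 τ), abs_nonneg (i2 τ)]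
          exact mul_le_mul (hβu2 τ) h1 (by positivity) hβ.le
      _ = β := mul_one _
  have hQ1_int : IntervalIntegrable Q1 volume 0 r := by
    apply hIIgen _ (((((measurable_const.sub hu1m)).mul hs1c.measurable).mul hi1c.measurable).sub
      (measurable_const.mul hi1c.measurable))
    refine ⟨β + γ, fun τ hτ => ?_⟩
    obtain ⟨a1, a2, a3, a4⟩ := habs τ hτ
    calc |(β - u1 τ) * s1 τ * i1 τ - γ * i1 τ|
        ≤ |(β - u1 τ) * s1 τ * i1 τ| + |γ * i1 τ| := abs_sub _ _
      _ ≤ β + γ := by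
          rw [mul_assoc, abs_mul, abs_mul, abs_mul, abs_of_pos hγ]
          have h1 : |s1 τ| * |i1 τ| ≤ 1 := by nlinarith [abs_nonneg (s1 τ), abs_nonneg (i1 τ)]
          have := mul_le_mul (hβu1 τ) h1 (by positivity) hβ.le
          have := mul_le_mul_of_nonneg_left a2 hγ.le
          linarith
  have hQ2_int : IntervalIntegrable Q2 volume 0 r := by
    apply hIIgen _ (((((measurable_const.sub hu2m)).mul hs2c.measurable).mul hi2c.measurable).sub
      (measurable_const.mul hi2c.measurable))
    refine ⟨β + γ, fun τ hτ => ?_⟩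
    obtain ⟨a1, a2, a3, a4⟩ := habs τ hτ
    calc |(β - u2 τ) * s2 τ * i2 τ - γ * i2 τ|
        ≤ |(β - u2 τ) * s2 τ * i2 τ| + |γ * i2 τ| := abs_sub _ _
      _ ≤ β + γ := by
          rw [mul_assoc, abs_mul, abs_mul, abs_mul, abs_of_pos hγ]
          have h1 : |s2 τ| * |i2 τ| ≤ 1 := by nlinarith [abs_nonneg (s2 τ), abs_nonneg (i2 τ)]
          have := mul_le_mul (hβu2 τ) h1 (by positivity) hβ.le
          have := mul_le_mul_of_nonneg_left a4 hγ.le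
          linarith
  -- split identities
  have hs_split : s1 r - s2 r = (∫ τ in (0:ℝ)..r, D1s τ) + ∫ τ in (0:ℝ)..r, D2 τ := by
    have h1 : s1 r - s2 r = (∫ τ in (0:ℝ)..r, P1 τ) - ∫ τ in (0:ℝ)..r, P2 τ := by
      rw [hs1eq r hr0, hs2eq r hr0]; ring
    have h2 : (∫ τ in (0:ℝ)..r, P1 τ) - (∫ τ in (0:ℝ)..r, P2 τ)
        = (∫ τ in (0:ℝ)..r, D1s τ) + ∫ τ in (0:ℝ)..r, D2 τ := by
      rw [← intervalIntegral.integral_sub hP1_int hP2_int,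
        ← intervalIntegral.integral_add hD1s_int hD2_int]
      apply intervalIntegral.integral_congr
      intro τ _
      simp only [hP1, hP2, hD1s, hD2]; ring
    rw [h1, h2]
  have hi_split : i1 r - i2 r = (∫ τ in (0:ℝ)..r, D1i τ) - ∫ τ in (0:ℝ)..r, D2 τ := by
    have h1 : i1 r - i2 r = (∫ τ in (0:ℝ)..r, Q1 τ) - ∫ τ in (0:ℝ)..r, Q2 τ := by
      rw [hi1eq r hr0, hi2eq r hr0]; ring
    have h2 : (∫ τ in (0:ℝ)..r, Q1 τ) - (∫ τ in (0:ℝ)..r, Q2 τ)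
        = (∫ τ in (0:ℝ)..r, D1i τ) - ∫ τ in (0:ℝ)..r, D2 τ := by
      rw [← intervalIntegral.integral_sub hQ1_int hQ2_int,
        ← intervalIntegral.integral_sub hD1i_int hD2_int]
      apply intervalIntegral.integral_congr
      intro τ _
      simp only [hQ1, hQ2, hD1i, hD2]; ring
    rw [h1, h2]
  -- estimates
  have hec_int : IntervalIntegrable e volume 0 r := hec.intervalIntegrable _ _
  have hest1 : |∫ τ in (0:ℝ)..r, D1s τ| ≤ β * ∫ σ in (0:ℝ)..r, e σ := by
    calc |∫ τ in (0:ℝ)..r, D1s τ| ≤ ∫ τ in (0:ℝ)..r, |D1s τ| :=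
          intervalIntegral.abs_integral_le_integral_abs hr0
      _ ≤ ∫ τ in (0:ℝ)..r, β * e τ := intervalIntegral.integral_mono_on hr0 hD1s_int.abs
          ((continuous_const.mul hec).intervalIntegrable _ _) hD1s_bd
      _ = β * ∫ σ in (0:ℝ)..r, e σ := intervalIntegral.integral_const_mul _ _
  have hest2 : |∫ τ in (0:ℝ)..r, D1i τ| ≤ (β + γ) * ∫ σ in (0:ℝ)..r, e σ := by
    calc |∫ τ in (0:ℝ)..r, D1i τ| ≤ ∫ τ in (0:ℝ)..r, |D1i τ| :=
          intervalIntegral.abs_integral_le_integral_abs hr0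
      _ ≤ ∫ τ in (0:ℝ)..r, (β + γ) * e τ := intervalIntegral.integral_mono_on hr0 hD1i_int.abs
          ((continuous_const.mul hec).intervalIntegrable _ _) hD1i_bd
      _ = (β + γ) * ∫ σ in (0:ℝ)..r, e σ := intervalIntegral.integral_const_mul _ _
  have hfin1 : |s1 r - s2 r| ≤ β * (∫ σ in (0:ℝ)..r, e σ) + |∫ τ in (0:ℝ)..r, D2 τ| := by
    rw [hs_split]
    calc |(∫ τ in (0:ℝ)..r, D1s τ) + ∫ τ in (0:ℝ)..r, D2 τ|
        ≤ |∫ τ in (0:ℝ)..r, D1s τ| + |∫ τ in (0:ℝ)..r, D2 τ| := abs_add_le _ _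
      _ ≤ β * (∫ σ in (0:ℝ)..r, e σ) + |∫ τ in (0:ℝ)..r, D2 τ| := by linarith
  have hfin2 : |i1 r - i2 r| ≤ (β + γ) * (∫ σ in (0:ℝ)..r, e σ) + |∫ τ in (0:ℝ)..r, D2 τ| := by
    rw [hi_split]
    calc |(∫ τ in (0:ℝ)..r, D1i τ) - ∫ τ in (0:ℝ)..r, D2 τ|
        ≤ |∫ τ in (0:ℝ)..r, D1i τ| + |∫ τ in (0:ℝ)..r, D2 τ| := abs_sub _ _
      _ ≤ (β + γ) * (∫ σ in (0:ℝ)..r, e σ) + |∫ τ in (0:ℝ)..r, D2 τ| := by linarith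
  have := add_le_add hfin1 hfin2
  rw [hD2] at this
  linarith

lemma traj_conv {β γ umax : ℝ} {un : ℕ → ℝ → ℝ} {sn iN : ℕ → ℝ → ℝ} {u s i : ℝ → ℝ}
    {s₀ i₀ : ℝ}
    (hβ : 0 < β) (hγ : 0 < γ) (humax : 0 < umax) (humaxβ : umax < β)
    (hun : ∀ n, IsControl umax (un n)) (hu : IsControl umax u)
    (hsoln : ∀ n, SIRSol β γ (un n) (sn n) (iN n) s₀ i₀)
    (hsol : SIRSol β γ u s i s₀ i₀)
    (hs₀ : 0 < s₀) (hi₀ : 0 < i₀) (hsum : s₀ + i₀ ≤ 1)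
    (hweak : WeakStarLim un u) :
    ∀ t, 0 ≤ t → Tendsto (fun n => iN n t) atTop (𝓝 (i t)) := by
  obtain ⟨hscont, hicont, hseq, hieq⟩ := hsol
  obtain ⟨humeas, hubd⟩ := hu
  -- bounds
  have hbdn : ∀ n, ∀ τ : ℝ, 0 ≤ τ → 0 ≤ sn n τ ∧ 0 ≤ iN n τ ∧ sn n τ + iN n τ ≤ 1 :=
    fun n => sir_bounds hβ hγ humaxβ (hun n) (hsoln n) hs₀ hi₀ hsum
  have hbd : ∀ τ : ℝ, 0 ≤ τ → 0 ≤ s τ ∧ 0 ≤ i τ ∧ s τ + i τ ≤ 1 :=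
    sir_bounds hβ hγ humaxβ ⟨humeas, hubd⟩ ⟨hscont, hicont, hseq, hieq⟩ hs₀ hi₀ hsum
  have hβun : ∀ n τ, |β - un n τ| ≤ β := by
    intro n τ
    have h1 := ((hun n).2 τ).1; have h2 := ((hun n).2 τ).2
    rw [abs_le]; constructor <;> nlinarith
  have huu : ∀ n τ, |un n τ - u τ| ≤ umax := by
    intro n τ
    have h1 := ((hun n).2 τ).1; have h2 := ((hun n).2 τ).2
    have h3 := (hubd τ).1; have h4 := (hubd τ).2
    rw [abs_le]; constructor <;> nlinarith
  -- the perturbation integral A n r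
  set A : ℕ → ℝ → ℝ := fun n r => ∫ σ in (0:ℝ)..r, (un n σ - u σ) * (s σ * i σ) with hA
  have hD2meas : ∀ n, Measurable fun τ => (un n τ - u τ) * (s τ * i τ) := fun n =>
    ((hun n).1.sub humeas).mul (hscont.measurable.mul hicont.measurable)
  have hD2int : ∀ n a b, IntervalIntegrable
      (fun τ => (un n τ - u τ) * (s τ * i τ)) volume a b := by
    intro n a b
    obtain ⟨M, hM⟩ := (isCompact_uIcc (a := a) (b := b)).exists_bound_of_continuousOn
      (hscont.mul hicont).continuousOn
    apply myII (C := umax * M) (hD2meas n)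
    intro τ hτ
    have hτ' := Set.uIoc_subset_uIcc hτ
    have h1 := hM τ hτ'
    rw [Real.norm_eq_abs] at h1
    rw [abs_mul]
    exact mul_le_mul (huu n τ) h1 (abs_nonneg _) humax.le
  have hAcont : ∀ n, Continuous (A n) := fun n =>
    intervalIntegral.continuous_primitive (hD2int n) 0
  have hAbound : ∀ n, ∀ r : ℝ, 0 ≤ r → |A n r| ≤ umax * r := by
    intro n r hr
    calc |A n r| ≤ ∫ σ in (0:ℝ)..r, |(un n σ - u σ) * (s σ * i σ)| :=
          intervalIntegral.abs_integral_le_integral_abs hr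
      _ ≤ ∫ σ in (0:ℝ)..r, umax := by
          apply intervalIntegral.integral_mono_on hr (hD2int n 0 r).abs
            (intervalIntegrable_const)
          intro τ hτ
          have h1 := (hbd τ hτ.1).1
          have h2 := (hbd τ hτ.1).2.1
          have h3 := (hbd τ hτ.1).2.2
          rw [abs_mul]
          have hsi : |s τ * i τ| ≤ 1 := by rw [abs_mul, abs_of_nonneg h1, abs_of_nonneg h2]; nlinarith
          calc |un n τ - u τ| * |s τ * i τ| ≤ umax * 1 :=
                mul_le_mul (huu n τ) hsi (abs_nonneg _) humax.le
            _ = umax := mul_one _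
      _ = umax * r := by rw [intervalIntegral.integral_const]; simp [mul_comm]
  -- per-point convergence of A
  have hAtend : ∀ r : ℝ, 0 ≤ r → Tendsto (fun n => A n r) atTop (𝓝 0) := by
    intro r hr
    set g : ℝ → ℝ := (Set.Ioc (0:ℝ) r).indicator (fun σ => s σ * i σ) with hg
    have hsiIoc : IntegrableOn (fun σ => s σ * i σ) (Set.Ioc 0 r) volume := by
      apply ((hscont.mul hicont).continuousOn).integrableOn_Icc.mono_set Set.Ioc_subset_Icc_self
    have hgint : IntegrableOn g (Set.Ioi 0) volume := by
      rw [IntegrableOn, hg]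
      rw [integrable_indicator_iff measurableSet_Ioc]
      rw [IntegrableOn, Measure.restrict_restrict measurableSet_Ioc,
        Set.Ioc_inter_Ioi, sup_eq_left.2 le_rfl]
      exact hsiIoc
    have hcalc : ∀ w : ℝ → ℝ, Measurable w → (∀ τ, w τ ∈ Set.Icc (0:ℝ) umax) →
        ∫ τ in Set.Ioi (0:ℝ), w τ * g τ = ∫ σ in (0:ℝ)..r, w σ * (s σ * i σ) := by
      intro w hw hwb
      have : (fun τ => w τ * g τ) = (Set.Ioc (0:ℝ) r).indicator (fun σ => w σ * (s σ * i σ)) := by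
        funext τ
        rw [hg]
        by_cases hτ : τ ∈ Set.Ioc (0:ℝ) r
        · rw [Set.indicator_of_mem hτ, Set.indicator_of_mem hτ]
        · rw [Set.indicator_of_notMem hτ, Set.indicator_of_notMem hτ, mul_zero]
      rw [this, MeasureTheory.integral_indicator measurableSet_Ioc]
      rw [Measure.restrict_restrict measurableSet_Ioc, Set.Ioc_inter_Ioi, sup_eq_left.2 le_rfl]
      rw [intervalIntegral.integral_of_le hr]
    have h1 := hweak g hgint
    rw [hcalc u humeas hubd] at h1
    have h2 : ∀ n, ∫ τ in Set.Ioi (0:ℝ), un n τ * g τ = ∫ σ in (0:ℝ)..r, un n σ * (s σ * i σ) :=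
      fun n => hcalc (un n) (hun n).1 (hun n).2
    simp only [h2] at h1
    -- now A n r = ∫ un·si - ∫ u·si
    have hsi_int : ∀ w : ℝ → ℝ, Measurable w → (∀ τ, w τ ∈ Set.Icc (0:ℝ) umax) →
        IntervalIntegrable (fun σ => w σ * (s σ * i σ)) volume 0 r := by
      intro w hw hwb
      obtain ⟨M, hM⟩ := (isCompact_uIcc (a := (0:ℝ)) (b := r)).exists_bound_of_continuousOn
        (hscont.mul hicont).continuousOn
      apply myII (C := umax * M) (hw.mul (hscont.measurable.mul hicont.measurable))
      intro τ hτ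
      have h1 := hM τ (Set.uIoc_subset_uIcc hτ)
      rw [Real.norm_eq_abs] at h1
      show |w τ * (s τ * i τ)| ≤ umax * M
      rw [abs_mul]
      have hwτ : |w τ| ≤ umax := by
        have := (hwb τ).1; have := (hwb τ).2
        rw [abs_le]; constructor <;> linarith
      exact mul_le_mul hwτ h1 (abs_nonneg _) humax.le
    have hAeq : ∀ n, A n r = (∫ σ in (0:ℝ)..r, un n σ * (s σ * i σ))
        - ∫ σ in (0:ℝ)..r, u σ * (s σ * i σ) := by
      intro n
      rw [hA]
      rw [← intervalIntegral.integral_sub (hsi_int (un n) (hun n).1 (hun n).2)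
        (hsi_int u humeas hubd)]
      apply intervalIntegral.integral_congr
      intro τ _
      ring
    simp only [hAeq]
    have := h1.sub (tendsto_const_nhds
      (x := ∫ σ in (0:ℝ)..r, u σ * (s σ * i σ)) (f := atTop))
    simpa using this
  -- key Gronwall estimate via key_est
  intro t ht
  have hKpos : (0:ℝ) < 2 * β + γ := by positivity
  have hecont : ∀ n, Continuous fun r => |sn n r - s r| + |iN n r - i r| := fun n =>
    ((hsoln n).1.sub hscont).abs.add (((hsoln n).2.1).sub hicont).abs
  have hgron : ∀ n, |sn n t - s t| + |iN n t - i t|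
      ≤ (2 * β + γ) * Real.exp ((2 * β + γ) * t) * (∫ σ in (0:ℝ)..t, 2 * |A n σ|)
        + 2 * |A n t| := by
    intro n
    apply my_gronwall hKpos ht (hecont n) (continuous_const.mul (hAcont n).abs)
      (fun r => by show (0:ℝ) ≤ 2 * |A n r|; positivity)
    intro r hr
    exact key_est hβ hγ humax humaxβ (hun n) ⟨humeas, hubd⟩ (hsoln n)
      ⟨hscont, hicont, hseq, hieq⟩ hs₀ hi₀ hsum hr.1
  -- ∫₀^t 2|A n σ| → 0 by dominated convergence
  have hint_tend : Tendsto (fun n => ∫ σ in (0:ℝ)..t, 2 * |A n σ|) atTop (𝓝 0) := by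
    have h0 : ∀ n, ∫ σ in (0:ℝ)..t, 2 * |A n σ|
        = ∫ σ in Set.Ioc (0:ℝ) t, 2 * |A n σ| := fun n =>
      intervalIntegral.integral_of_le ht
    simp only [h0]
    have := MeasureTheory.tendsto_integral_of_dominated_convergence
      (μ := volume.restrict (Set.Ioc (0:ℝ) t))
      (F := fun n σ => 2 * |A n σ|) (f := fun _ => (0:ℝ))
      (bound := fun _ => 2 * (umax * t))
      (fun n => (continuous_const.mul (hAcont n).abs).aestronglyMeasurable)
      (by
        rw [MeasureTheory.integrable_const_iff]
        right
        exact isFiniteMeasure_restrict.mpr measure_Ioc_lt_top.ne)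
      (fun n => by
        refine (ae_restrict_mem measurableSet_Ioc).mono fun σ hσ => ?_
        have h1 := hAbound n σ hσ.1.le
        have h2 : umax * σ ≤ umax * t := mul_le_mul_of_nonneg_left hσ.2 humax.le
        rw [Real.norm_eq_abs, abs_of_nonneg (by positivity : (0:ℝ) ≤ 2 * |A n σ|)]
        show (2:ℝ) * |A n σ| ≤ 2 * (umax * t)
        linarith)
      (by
        refine (ae_restrict_mem measurableSet_Ioc).mono fun σ hσ => ?_
        have := (hAtend σ hσ.1.le).abs.const_mul 2
        simpa using this)
    simpa using this
  have hAt_tend : Tendsto (fun n => 2 * |A n t|) atTop (𝓝 0) := by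
    have := (hAtend t ht).abs.const_mul 2
    simpa using this
  have hup : Tendsto (fun n => (2 * β + γ) * Real.exp ((2 * β + γ) * t)
      * (∫ σ in (0:ℝ)..t, 2 * |A n σ|) + 2 * |A n t|) atTop (𝓝 0) := by
    have := (hint_tend.const_mul ((2 * β + γ) * Real.exp ((2 * β + γ) * t))).add hAt_tend
    simpa using this
  have het : Tendsto (fun n => |sn n t - s t| + |iN n t - i t|) atTop (𝓝 0) := by
    apply tendsto_of_tendsto_of_tendsto_of_le_of_le tendsto_const_nhds hup
    · intro n; positivity
    · exact hgron
  have hdist : Tendsto (fun n => |iN n t - i t|) atTop (𝓝 0) := by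
    apply tendsto_of_tendsto_of_tendsto_of_le_of_le tendsto_const_nhds het
    · intro n; positivity
    · intro n; simp only; linarith [abs_nonneg (sn n t - s t)]
  rw [tendsto_iff_dist_tendsto_zero]
  simpa [Real.dist_eq] using hdist

/-- Variational property of the Γ-convergence: a weak* limit of finite-horizon optimal
controls (extended by `0`) is optimal for the infinite-horizon problem `P^∞_{λ₁,λ₂}`. -/
theorem statement16 (β γ umax iM l1 l2 : ℝ) (hβ : 0 < β) (hγ : 0 < γ)
    (humax : 0 < umax) (humaxβ : umax < β) (hiM : iM ∈ Set.Ioo (0:ℝ) 1)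
    (hl1 : 0 < l1) (hl2 : 0 ≤ l2)
    (s₀ i₀ : ℝ) (hB : (s₀, i₀) ∈ ViableSet β γ umax iM) (hi₀ : 0 < i₀)
    (Tn : ℕ → ℝ) (hTn0 : ∀ n, 0 < Tn n)
    (hTtop : Filter.Tendsto Tn Filter.atTop Filter.atTop)
    (un : ℕ → ℝ → ℝ) (sn iN : ℕ → ℝ → ℝ) (u s i : ℝ → ℝ)
    (hun : ∀ n, IsControl umax (un n))
    (hzero : ∀ n, ∀ t : ℝ, Tn n < t → un n t = 0)
    (hsoln : ∀ n, SIRSol β γ (un n) (sn n) (iN n) s₀ i₀)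
    (hadmn : ∀ n, ∀ t ∈ Set.Icc (0:ℝ) (Tn n), iN n t ≤ iM)
    (hoptn : ∀ n, ∀ v sv iv : ℝ → ℝ, IsControl umax v →
      SIRSolOn β γ (Tn n) v sv iv s₀ i₀ → (∀ t ∈ Set.Icc (0:ℝ) (Tn n), iv t ≤ iM) →
      CostT l1 l2 (Tn n) (un n) (iN n) ≤ CostT l1 l2 (Tn n) v iv)
    (hu : IsControl umax u) (hsol : SIRSol β γ u s i s₀ i₀)
    (hweak : WeakStarLim un u) :
    Admissible iM i ∧
    ∀ v sv iv : ℝ → ℝ, IsControl umax v → SIRSol β γ v sv iv s₀ i₀ →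
      Admissible iM iv → Cost l1 l2 u i ≤ Cost l1 l2 v iv := by
  obtain ⟨hTri, -⟩ := hB
  obtain ⟨hs₀pos, hs₀le, hi₀pos, hi₀le, hsum⟩ := hTri
  simp only at hs₀pos hs₀le hi₀pos hi₀le hsum
  have hconv : ∀ t, 0 ≤ t → Filter.Tendsto (fun n => iN n t) Filter.atTop (nhds (i t)) :=
    traj_conv hβ hγ humax humaxβ hun hu hsoln hsol hs₀pos hi₀pos hsum hweak
  have hbd : ∀ τ : ℝ, 0 ≤ τ → 0 ≤ s τ ∧ 0 ≤ i τ ∧ s τ + i τ ≤ 1 :=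
    sir_bounds hβ hγ humaxβ hu hsol hs₀pos hi₀pos hsum
  have hbdn : ∀ n, ∀ τ : ℝ, 0 ≤ τ → 0 ≤ sn n τ ∧ 0 ≤ iN n τ ∧ sn n τ + iN n τ ≤ 1 :=
    fun n => sir_bounds hβ hγ humaxβ (hun n) (hsoln n) hs₀pos hi₀pos hsum
  constructor
  · -- admissibility of the limit
    intro t ht
    have hev : ∀ᶠ n in Filter.atTop, iN n t ≤ iM :=
      (hTtop.eventually_ge_atTop t).mono fun n hn => hadmn n t ⟨ht, hn⟩
    exact le_of_tendsto (hconv t ht) hev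
  · intro v sv iv hv hsolv hadmv
    -- Step A : finite-horizon optimal values are below the infinite-horizon cost of v
    have hstepA : ∀ n, CostT l1 l2 (Tn n) (un n) (iN n) ≤ Cost l1 l2 v iv := by
      intro n
      have h1 : SIRSolOn β γ (Tn n) v sv iv s₀ i₀ :=
        ⟨hsolv.1.continuousOn, hsolv.2.1.continuousOn,
          fun t ht => hsolv.2.2.1 t ht.1, fun t ht => hsolv.2.2.2 t ht.1⟩
      have h2 : ∀ t ∈ Set.Icc (0:ℝ) (Tn n), iv t ≤ iM := fun t ht => hadmv t ht.1
      refine (hoptn n v sv iv hv h1 h2).trans ?_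
      exact lintegral_mono_set Set.Ioc_subset_Ioi_self
    -- the ENNReal-valued integrand of the limit problem
    set f : ℝ → ℝ≥0∞ := fun t => ENNReal.ofReal (l1 * u t + l2 * i t) with hf
    have hfmeas : Measurable f := by
      apply Measurable.ennreal_ofReal
      exact (measurable_const.mul hu.1).add (measurable_const.mul hsol.2.1.measurable)
    -- Cost u i as a sup of integrals over Ioc 0 M
    have hcost_sup : Cost l1 l2 u i = ⨆ M : ℕ, ∫⁻ t in Set.Ioc (0:ℝ) (M:ℝ), f t := by
      have h1 : Cost l1 l2 u i = ∫⁻ t, (Set.Ioi (0:ℝ)).indicator f t :=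
        (lintegral_indicator measurableSet_Ioi f).symm
      have h2 : ∀ M : ℕ, ∫⁻ t in Set.Ioc (0:ℝ) (M:ℝ), f t
          = ∫⁻ t, (Set.Ioc (0:ℝ) (M:ℝ)).indicator f t :=
        fun M => (lintegral_indicator measurableSet_Ioc f).symm
      rw [h1]
      simp only [h2]
      rw [← lintegral_iSup]
      · congr 1
        funext t
        apply le_antisymm
        · by_cases ht : t ∈ Set.Ioi (0:ℝ)
          · have htM : t ∈ Set.Ioc (0:ℝ) ((⌈t⌉₊ : ℕ) : ℝ) := ⟨ht, Nat.le_ceil t⟩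
            refine le_iSup_of_le ⌈t⌉₊ ?_
            rw [Set.indicator_of_mem ht, Set.indicator_of_mem htM]
          · rw [Set.indicator_of_notMem ht]
            exact zero_le
        · apply iSup_le
          intro M
          exact Set.indicator_le_indicator_of_subset Set.Ioc_subset_Ioi_self
            (fun a => zero_le) t
      · exact fun M => hfmeas.indicator measurableSet_Ioc
      · intro M N hMN
        intro t
        exact Set.indicator_le_indicator_of_subset
          (Set.Ioc_subset_Ioc_right (by exact_mod_cast hMN)) (fun a => zero_le) t
    rw [hcost_sup]
    apply iSup_le
    intro M
    -- it suffices to bound each truncation by the liminf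
    set L : ℝ≥0∞ := Filter.liminf (fun n => CostT l1 l2 (Tn n) (un n) (iN n)) Filter.atTop
      with hL
    have hLle : L ≤ Cost l1 l2 v iv := by
      apply Filter.liminf_le_of_frequently_le' (Filter.Frequently.of_forall hstepA)
    refine le_trans ?_ hLle
    -- integrability of the real integrands on Ioc 0 M
    have hfinite : volume (Set.Ioc (0:ℝ) (M:ℝ)) ≠ ⊤ := measure_Ioc_lt_top.ne
    have hIu : IntegrableOn u (Set.Ioc (0:ℝ) (M:ℝ)) volume := by
      apply Measure.integrableOn_of_bounded (M := umax) hfinite hu.1.aestronglyMeasurable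
      refine ae_of_all _ fun t => ?_
      rw [Real.norm_eq_abs, abs_le]
      exact ⟨by linarith [(hu.2 t).1, humax], (hu.2 t).2⟩
    have hIi : IntegrableOn i (Set.Ioc (0:ℝ) (M:ℝ)) volume := by
      apply Measure.integrableOn_of_bounded (M := 1) hfinite
        hsol.2.1.measurable.aestronglyMeasurable
      refine (ae_restrict_mem measurableSet_Ioc).mono fun t ht => ?_
      obtain ⟨b1, b2, b3⟩ := hbd t ht.1.le
      rw [Real.norm_eq_abs, abs_of_nonneg b2]
      linarith
    have hIun : ∀ n, IntegrableOn (un n) (Set.Ioc (0:ℝ) (M:ℝ)) volume := by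
      intro n
      apply Measure.integrableOn_of_bounded (M := umax) hfinite (hun n).1.aestronglyMeasurable
      refine ae_of_all _ fun t => ?_
      rw [Real.norm_eq_abs, abs_le]
      exact ⟨by linarith [((hun n).2 t).1, humax], ((hun n).2 t).2⟩
    have hIin : ∀ n, IntegrableOn (iN n) (Set.Ioc (0:ℝ) (M:ℝ)) volume := by
      intro n
      apply Measure.integrableOn_of_bounded (M := 1) hfinite
        (hsoln n).2.1.measurable.aestronglyMeasurable
      refine (ae_restrict_mem measurableSet_Ioc).mono fun t ht => ?_
      obtain ⟨b1, b2, b3⟩ := hbdn n t ht.1.le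
      rw [Real.norm_eq_abs, abs_of_nonneg b2]
      linarith
    have hIw : ∀ n, IntegrableOn (fun t => l1 * un n t + l2 * iN n t)
        (Set.Ioc (0:ℝ) (M:ℝ)) volume :=
      fun n => ((hIun n).const_mul l1).add ((hIin n).const_mul l2)
    have hIwlim : IntegrableOn (fun t => l1 * u t + l2 * i t)
        (Set.Ioc (0:ℝ) (M:ℝ)) volume :=
      (hIu.const_mul l1).add (hIi.const_mul l2)
    -- weak* convergence of the control integrals over Ioc 0 M
    have hcalc : ∀ w : ℝ → ℝ, ∫ t in Set.Ioi (0:ℝ),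
        w t * (Set.Ioc (0:ℝ) (M:ℝ)).indicator (fun _ => (1:ℝ)) t
          = ∫ t in Set.Ioc (0:ℝ) (M:ℝ), w t := by
      intro w
      have h1 : (fun t => w t * (Set.Ioc (0:ℝ) (M:ℝ)).indicator (fun _ => (1:ℝ)) t)
          = (Set.Ioc (0:ℝ) (M:ℝ)).indicator w := by
        funext t
        by_cases ht : t ∈ Set.Ioc (0:ℝ) (M:ℝ)
        · rw [Set.indicator_of_mem ht, Set.indicator_of_mem ht, mul_one]
        · rw [Set.indicator_of_notMem ht, Set.indicator_of_notMem ht, mul_zero]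
      rw [h1, MeasureTheory.integral_indicator measurableSet_Ioc,
        Measure.restrict_restrict measurableSet_Ioc, Set.Ioc_inter_Ioi, sup_eq_left.2 le_rfl]
    have hgint : IntegrableOn ((Set.Ioc (0:ℝ) (M:ℝ)).indicator (fun _ => (1:ℝ)))
        (Set.Ioi (0:ℝ)) volume := by
      rw [IntegrableOn, integrable_indicator_iff measurableSet_Ioc]
      apply Measure.integrableOn_of_bounded (M := 1)
      · rw [Measure.restrict_apply measurableSet_Ioc]
        exact ((measure_mono (Set.inter_subset_left)).trans_lt measure_Ioc_lt_top).ne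
      · exact aestronglyMeasurable_const
      · exact ae_of_all _ fun t => by rw [Real.norm_eq_abs, abs_one]
    have htend_un : Filter.Tendsto (fun n => ∫ t in Set.Ioc (0:ℝ) (M:ℝ), un n t)
        Filter.atTop (nhds (∫ t in Set.Ioc (0:ℝ) (M:ℝ), u t)) := by
      have := hweak _ hgint
      simp only [hcalc] at this
      exact this
    have htend_in : Filter.Tendsto (fun n => ∫ t in Set.Ioc (0:ℝ) (M:ℝ), iN n t)
        Filter.atTop (nhds (∫ t in Set.Ioc (0:ℝ) (M:ℝ), i t)) := by
      apply MeasureTheory.tendsto_integral_of_dominated_convergence (bound := fun _ => (1:ℝ))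
      · exact fun n => (hsoln n).2.1.measurable.aestronglyMeasurable.restrict
      · rw [MeasureTheory.integrable_const_iff]
        right
        exact isFiniteMeasure_restrict.mpr measure_Ioc_lt_top.ne
      · intro n
        refine (ae_restrict_mem measurableSet_Ioc).mono fun t ht => ?_
        obtain ⟨b1, b2, b3⟩ := hbdn n t ht.1.le
        rw [Real.norm_eq_abs, abs_of_nonneg b2]
        linarith
      · exact (ae_restrict_mem measurableSet_Ioc).mono fun t ht => hconv t ht.1.le
    have heqn : ∀ n, ∫ t in Set.Ioc (0:ℝ) (M:ℝ), (l1 * un n t + l2 * iN n t)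
        = l1 * (∫ t in Set.Ioc (0:ℝ) (M:ℝ), un n t)
          + l2 * ∫ t in Set.Ioc (0:ℝ) (M:ℝ), iN n t := by
      intro n
      rw [MeasureTheory.integral_add ((hIun n).const_mul l1) ((hIin n).const_mul l2),
        MeasureTheory.integral_const_mul, MeasureTheory.integral_const_mul]
    have heqlim : ∫ t in Set.Ioc (0:ℝ) (M:ℝ), (l1 * u t + l2 * i t)
        = l1 * (∫ t in Set.Ioc (0:ℝ) (M:ℝ), u t)
          + l2 * ∫ t in Set.Ioc (0:ℝ) (M:ℝ), i t := by
      rw [MeasureTheory.integral_add (hIu.const_mul l1) (hIi.const_mul l2),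
        MeasureTheory.integral_const_mul, MeasureTheory.integral_const_mul]
    have htend : Filter.Tendsto (fun n => ∫ t in Set.Ioc (0:ℝ) (M:ℝ), (l1 * un n t + l2 * iN n t))
        Filter.atTop (nhds (∫ t in Set.Ioc (0:ℝ) (M:ℝ), (l1 * u t + l2 * i t))) := by
      simp only [heqn, heqlim]
      exact (htend_un.const_mul l1).add (htend_in.const_mul l2)
    have hofReal : ∀ n, ENNReal.ofReal (∫ t in Set.Ioc (0:ℝ) (M:ℝ), (l1 * un n t + l2 * iN n t))
        = ∫⁻ t in Set.Ioc (0:ℝ) (M:ℝ), ENNReal.ofReal (l1 * un n t + l2 * iN n t) := by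
      intro n
      apply MeasureTheory.ofReal_integral_eq_lintegral_ofReal (hIw n)
      refine (ae_restrict_mem measurableSet_Ioc).mono fun t ht => ?_
      obtain ⟨b1, b2, b3⟩ := hbdn n t ht.1.le
      have := ((hun n).2 t).1
      simp only [Pi.zero_apply]
      positivity
    have hle : ∀ᶠ n in Filter.atTop,
        ENNReal.ofReal (∫ t in Set.Ioc (0:ℝ) (M:ℝ), (l1 * un n t + l2 * iN n t))
          ≤ CostT l1 l2 (Tn n) (un n) (iN n) := by
      refine (hTtop.eventually_ge_atTop (M:ℝ)).mono fun n hn => ?_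
      rw [hofReal n]
      exact lintegral_mono_set (Set.Ioc_subset_Ioc_right hn)
    have h1 : ∫⁻ t in Set.Ioc (0:ℝ) (M:ℝ), f t
        = ENNReal.ofReal (∫ t in Set.Ioc (0:ℝ) (M:ℝ), (l1 * u t + l2 * i t)) := by
      rw [hf]
      refine (MeasureTheory.ofReal_integral_eq_lintegral_ofReal hIwlim ?_).symm
      refine (ae_restrict_mem measurableSet_Ioc).mono fun t ht => ?_
      obtain ⟨b1, b2, b3⟩ := hbd t ht.1.le
      have := (hu.2 t).1
      simp only [Pi.zero_apply]
      positivity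
    have h2 := ENNReal.tendsto_ofReal htend
    rw [h1, ← h2.liminf_eq]
    exact Filter.liminf_le_liminf hle
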